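/- The warping function w(r) = (1/2)·arcsinh(2r) satisfies, for all r > 0: 1/w(r)² - (w'(r)/w(r))² ≥ -w''(r)/w(r) > -w'''(r)/w'(r). -/

import Mathlib

open Real

noncomputable def A (s : ℝ) : ℝ := 1 + 4 * s ^ 2

lemma hA_pos (s : ℝ) : 0 < A s := by unfold A; positivity

lemma hdA (s : ℝ) : HasDerivAt A (8 * s) s := by
  have : HasDerivAt (fun s : ℝ => 1 + 4 * s ^ 2) (0 + 4 * (2 * s ^ 1)) s := by
    exact (hasDerivAt_const s 1).add (((hasDerivAt_pow 2 s)).const_mul 4)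
  exact this.congr_deriv (by ring : (0 + 4 * (2 * s ^ 1) : ℝ) = 8 * s)

lemma d1 (s : ℝ) : HasDerivAt (fun s => (1/2) * Real.arsinh (2*s)) (A s ^ (-(1/2) : ℝ)) s := by
  have h2 : HasDerivAt (fun s : ℝ => 2 * s) 2 s := by simpa using (hasDerivAt_id s).const_mul 2
  have h := ((Real.hasDerivAt_arsinh (2*s)).comp s h2).const_mul (1/2 : ℝ)
  refine h.congr_deriv ?_
  have hApos := hA_pos s
  have hAe : 1 + (2*s)^2 = A s := by unfold A; ring
  rw [hAe, Real.rpow_neg hApos.le, Real.sqrt_eq_rpow]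
  ring

lemma d2 (s : ℝ) : HasDerivAt (fun s => A s ^ (-(1/2) : ℝ)) (-4 * s * A s ^ (-(3/2) : ℝ)) s := by
  have h := (hdA s).rpow_const (p := (-(1/2) : ℝ)) (Or.inl (hA_pos s).ne')
  convert h using 1
  rw [show (-(1/2) : ℝ) - 1 = -(3/2) by norm_num]
  ring

lemma d3 (s : ℝ) : HasDerivAt (fun s => -4 * s * A s ^ (-(3/2) : ℝ))
    ((32 * s ^ 2 - 4) * A s ^ (-(5/2) : ℝ)) s := by
  have hs : HasDerivAt (fun s : ℝ => -4 * s) (-4) s := by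
    simpa using (hasDerivAt_id s).const_mul (-4 : ℝ)
  have hp := (hdA s).rpow_const (p := (-(3/2) : ℝ)) (Or.inl (hA_pos s).ne')
  have h := hs.mul hp
  refine h.congr_deriv ?_
  rw [show (-(3/2) : ℝ) - 1 = -(5/2) by norm_num]
  have key : A s ^ (-(3/2) : ℝ) = A s * A s ^ (-(5/2) : ℝ) := by
    rw [← Real.rpow_one_add' (hA_pos s).le (by norm_num)]
    norm_num
  rw [key]; unfold A; ring

/-- The warping function `w(r) = (1/2)·arcsinh(2r)` of the generalized paraboloid
satisfies `1/w² - (w'/w)² ≥ -w''/w > -w'''/w'` for all `r > 0`. -/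
theorem stmt_2 (w : ℝ → ℝ) (hw : w = fun s => (1/2) * Real.arsinh (2*s)) :
    ∀ r ∈ Set.Ioi (0:ℝ),
      -(deriv (deriv w) r) / w r ≤ 1 / (w r) ^ 2 - (deriv w r / w r) ^ 2 ∧
      -(deriv (deriv (deriv w)) r) / deriv w r < -(deriv (deriv w) r) / w r := by
  have hw1 : deriv w = fun s => A s ^ (-(1/2) : ℝ) := by
    funext s; rw [hw]; exact (d1 s).deriv
  have hw2 : deriv (deriv w) = fun s => -4 * s * A s ^ (-(3/2) : ℝ) := by
    rw [hw1]; funext s; exact (d2 s).deriv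
  have hw3 : deriv (deriv (deriv w)) = fun s => (32 * s ^ 2 - 4) * A s ^ (-(5/2) : ℝ) := by
    rw [hw2]; funext s; exact (d3 s).deriv
  intro r hr
  simp only [Set.mem_Ioi] at hr
  have hApos := hA_pos r
  set t := Real.arsinh (2*r) with htdef
  set a := A r ^ (-(1/2) : ℝ) with hadef
  have ha : 0 < a := Real.rpow_pos_of_pos hApos _
  have ht : 0 < t := by
    rw [htdef, ← Real.arsinh_zero]
    exact Real.arsinh_lt_arsinh.mpr (by linarith)
  have htr : t ≤ 2 * r := by
    have h1 : 2 * r < Real.sinh (2*r) := Real.self_lt_sinh_iff.mpr (by linarith)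
    have := Real.arsinh_lt_arsinh.mpr h1
    rw [Real.arsinh_sinh] at this
    exact le_of_lt this
  have hb : A r ^ (-(3/2) : ℝ) = a ^ 3 := by
    rw [hadef, ← Real.rpow_natCast (A r ^ (-(1/2):ℝ)) 3, ← Real.rpow_mul hApos.le]
    norm_num
  have hc : A r ^ (-(5/2) : ℝ) = a ^ 5 := by
    rw [hadef, ← Real.rpow_natCast (A r ^ (-(1/2):ℝ)) 5, ← Real.rpow_mul hApos.le]
    norm_num
  have ha2 : a ^ 2 * A r = 1 := by
    rw [hadef, ← Real.rpow_natCast (A r ^ (-(1/2):ℝ)) 2, ← Real.rpow_mul hApos.le]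
    norm_num
    rw [Real.rpow_neg_one]
    field_simp
  have hA1 : 1 ≤ A r := by unfold A; nlinarith
  have ha1 : a ≤ 1 := by nlinarith
  have hAr : A r = 1 + 4 * r ^ 2 := rfl
  have hwr : w r = 1/2 * t := by rw [hw]
  rw [hw3, hw2, hw1]
  simp only
  rw [hb, hc, hwr]
  rw [hAr] at ha2
  have key : a * t ≤ 2 * r := by nlinarith
  constructor
  · rw [← sub_nonneg]
    have e : 1 / (1/2*t) ^ 2 - (a / (1/2*t)) ^ 2 - -(-4 * r * a ^ 3) / (1/2*t)
        = 8 * r * a ^ 2 * (2 * r - a * t) / t ^ 2 := by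
      field_simp
      linear_combination (-4) * ha2
    rw [e]
    apply div_nonneg _ (sq_nonneg t)
    apply mul_nonneg (by positivity) (by linarith)
  · rw [← sub_pos]
    have e2 : -(-4 * r * a ^ 3) / (1/2*t) - -((32 * r ^ 2 - 4) * a ^ 5) / a
        = a ^ 3 * (8 * r - (4 - 32 * r ^ 2) * (a * t)) / t := by
      field_simp
      ring
    rw [e2]
    have hkey2 : (4 - 32 * r ^ 2) * (a * t) < 8 * r := by
      rcases le_or_gt (4 - 32 * r ^ 2) 0 with h | h
      · nlinarith [mul_pos ha ht]
      · nlinarith [mul_pos ha ht, mul_pos (mul_pos hr hr) hr]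
    apply div_pos (mul_pos (pow_pos ha 3) (by linarith)) ht
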